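/- arXiv:1210.7673 — 5 statements merged into one kernel-verified Lean document; each statement's English description precedes it below -/
import Mathlib

section
/- Let H be a complex Hadamard matrix of even order d whose columns C_1, C_2 satisfy (C_1)_k = a_k and (C_2)_k = (-1)^k a_k with |a_k| = 1. For ξ ∈ ℝ, define C_1(ξ)_k = e^{i(-1)^k ξ} a_k and C_2(ξ)_k = (-1)^k e^{i(-1)^k ξ} a_k. Then the matrix H(ξ) obtained from H by replacing columns C_1, C_2 with C_1(ξ), C_2(ξ) is a complex Hadamard matrix for every ξ. -/
open Complex Finset

/-- A complex Hadamard matrix: unimodular entries and pairwise orthogonal columns. -/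
def IsCHM {d : ℕ} (H : Matrix (Fin d) (Fin d) ℂ) : Prop :=
  (∀ i j, ‖H i j‖ = 1) ∧
  ∀ j k, j ≠ k → ∑ i, (starRingEnd ℂ) (H i j) * H i k = 0

lemma ER_exp_expand (k : ℕ) (ξ : ℝ) :
    Complex.exp (Complex.I * (-1 : ℂ) ^ k * (ξ : ℂ)) =
      Complex.cos ξ + (-1 : ℂ) ^ k * (Complex.I * Complex.sin ξ) := by
  rcases Nat.even_or_odd k with hk | hk
  · rw [hk.neg_one_pow]
    rw [show Complex.I * 1 * (ξ : ℂ) = (ξ : ℂ) * Complex.I by ring, Complex.exp_mul_I]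
    ring
  · rw [hk.neg_one_pow]
    rw [show Complex.I * (-1) * (ξ : ℂ) = (-ξ : ℂ) * Complex.I by ring, Complex.exp_mul_I,
      Complex.cos_neg, Complex.sin_neg]
    ring

/-- deforming an ER pair of columns of a complex Hadamard matrix of even
order by the phases `e^{i(-1)^k ξ}` yields a complex Hadamard matrix for every `ξ`. -/
theorem ER_deformation_is_hadamard (d : ℕ) (hd : Even d)
    (H : Matrix (Fin d) (Fin d) ℂ) (hH : IsCHM H)
    (c1 c2 : Fin d) (hne : c1 ≠ c2) (a : Fin d → ℂ)
    (ha : ∀ k, ‖a k‖ = 1)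
    (h1 : ∀ k, H k c1 = a k)
    (h2 : ∀ k, H k c2 = (-1 : ℂ) ^ (k : ℕ) * a k)
    (ξ : ℝ) (H' : Matrix (Fin d) (Fin d) ℂ)
    (hH' : ∀ j k, H' j k =
      if k = c1 then Complex.exp (Complex.I * (-1 : ℂ) ^ (j : ℕ) * (ξ : ℂ)) * a j
      else if k = c2 then
        (-1 : ℂ) ^ (j : ℕ) * Complex.exp (Complex.I * (-1 : ℂ) ^ (j : ℕ) * (ξ : ℂ)) * a j
      else H j k) :
    IsCHM H' := by
  obtain ⟨habs, horth⟩ := hH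
  set cs : ℂ := Complex.cos ξ with hcs
  set ss : ℂ := Complex.I * Complex.sin ξ with hss
  have hconj_cs : (starRingEnd ℂ) cs = cs := by
    rw [hcs, ← Complex.ofReal_cos, Complex.conj_ofReal]
  have hconj_ss : (starRingEnd ℂ) ss = -ss := by
    rw [hss, map_mul, Complex.conj_I, ← Complex.ofReal_sin, Complex.conj_ofReal]; ring
  have habse : ∀ k : ℕ, ‖Complex.exp (Complex.I * (-1 : ℂ) ^ k * (ξ : ℂ))‖ = 1 := by
    intro k
    rw [show Complex.I * (-1 : ℂ) ^ k * (ξ : ℂ) = (((-1 : ℝ) ^ k * ξ : ℝ) : ℂ) * Complex.I by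
      push_cast; ring]
    exact Complex.norm_exp_ofReal_mul_I _
  have hsq : ∀ k : ℕ, (-1 : ℂ) ^ k * (-1 : ℂ) ^ k = 1 := by
    intro k; rw [← pow_add]; exact Even.neg_one_pow ⟨k, rfl⟩
  have hc1' : ∀ k, H' k c1 = cs * H k c1 + ss * H k c2 := by
    intro k
    rw [hH', if_pos rfl, ER_exp_expand, h1, h2]
    ring
  have hc2' : ∀ k, H' k c2 = ss * H k c1 + cs * H k c2 := by
    intro k
    rw [hH', if_neg (Ne.symm hne), if_pos rfl, ER_exp_expand, h1, h2]
    linear_combination ss * a k * hsq (k : ℕ)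
  have col : ∀ (u : Fin d) (i : Fin d), u ≠ c1 → u ≠ c2 → H' i u = H i u := by
    intro u i hu1 hu2; rw [hH', if_neg hu1, if_neg hu2]
  have split2 : ∀ (x y : ℂ) (f g h : Fin d → ℂ),
      ∑ i, f i * (x * g i + y * h i) = x * (∑ i, f i * g i) + y * (∑ i, f i * h i) := by
    intro x y f g h
    rw [Finset.mul_sum, Finset.mul_sum, ← Finset.sum_add_distrib]
    exact Finset.sum_congr rfl fun i _ => by ring
  have split2' : ∀ (x y : ℂ) (f g h : Fin d → ℂ),
      ∑ i, (x * f i + y * g i) * h i = x * (∑ i, f i * h i) + y * (∑ i, g i * h i) := by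
    intro x y f g h
    rw [Finset.mul_sum, Finset.mul_sum, ← Finset.sum_add_distrib]
    exact Finset.sum_congr rfl fun i _ => by ring
  have split4 : ∀ (x y z w : ℂ) (f g p q : Fin d → ℂ),
      ∑ i, (x * f i + y * g i) * (z * p i + w * q i) =
        x * z * (∑ i, f i * p i) + x * w * (∑ i, f i * q i) +
        y * z * (∑ i, g i * p i) + y * w * (∑ i, g i * q i) := by
    intro x y z w f g p q
    rw [Finset.mul_sum, Finset.mul_sum, Finset.mul_sum, Finset.mul_sum,
      ← Finset.sum_add_distrib, ← Finset.sum_add_distrib, ← Finset.sum_add_distrib]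
    exact Finset.sum_congr rfl fun i _ => by ring
  have hconjpow : ∀ k : ℕ, (starRingEnd ℂ) ((-1 : ℂ) ^ k) = (-1 : ℂ) ^ k := by
    intro k; rw [map_pow, map_neg, map_one]
  have hSdiag : (∑ i, (starRingEnd ℂ) (H i c1) * H i c1)
      = ∑ i, (starRingEnd ℂ) (H i c2) * H i c2 := by
    apply Finset.sum_congr rfl
    intro i _
    rw [h1, h2, map_mul, hconjpow]
    linear_combination (starRingEnd ℂ) (a i) * a i * (hsq (i : ℕ)).symm
  constructor
  · intro i j
    rw [hH']
    split_ifs with h1' h2'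
    · rw [norm_mul, habse, ha, mul_one]
    · rw [norm_mul, norm_mul, habse, ha]
      have : ‖(-1 : ℂ) ^ (i : ℕ)‖ = 1 := by
        simp
      rw [this]; ring
    · exact habs i j
  · intro j k hjk
    by_cases hj1 : j = c1
    · rw [hj1] at hjk ⊢
      by_cases hk2 : k = c2
      · rw [hk2] at hjk ⊢
        simp_rw [hc1', hc2', map_add, map_mul, hconj_cs, hconj_ss]
        rw [split4, hSdiag, horth c1 c2 hne, horth c2 c1 (Ne.symm hne)]
        ring
      · simp_rw [hc1', map_add, map_mul, hconj_cs, hconj_ss, col k _ (Ne.symm hjk) hk2]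
        rw [split2', horth c1 k hjk, horth c2 k (fun h => hk2 h.symm)]
        ring
    · by_cases hj2 : j = c2
      · rw [hj2] at hjk ⊢
        by_cases hk1 : k = c1
        · rw [hk1] at hjk ⊢
          simp_rw [hc1', hc2', map_add, map_mul, hconj_cs, hconj_ss]
          rw [split4, hSdiag, horth c1 c2 hne, horth c2 c1 (Ne.symm hne)]
          ring
        · simp_rw [hc2', map_add, map_mul, hconj_cs, hconj_ss, col k _ hk1 (Ne.symm hjk)]
          rw [split2', horth c1 k (fun h => hk1 h.symm), horth c2 k hjk]
          ring
      · by_cases hk1 : k = c1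
        · rw [hk1] at hjk ⊢
          simp_rw [hc1', col j _ hjk hj2]
          rw [split2, horth j c1 hjk, horth j c2 hj2]
          ring
        · by_cases hk2 : k = c2
          · rw [hk2] at hjk ⊢
            simp_rw [hc2', col j _ hj1 hjk]
            rw [split2, horth j c1 hj1, horth j c2 hjk]
            ring
          · simp_rw [col j _ hj1 hj2, col k _ hk1 hk2]
            exact horth j k hjk
end

section
/- Let H be a d×d complex Hadamard matrix (d even) possessing d/2 pairwise disjoint aligned ER pairs of columns and d/2 pairwise disjoint aligned ER pairs of rows, where aligned means the sign patterns (C_1)_k^* (C_2)_k agree across all column pairs. Then, after suitable row and column permutations, H has the block form [[A, B],[A, -B]] where A and B are (d/2)×(d/2) complex Hadamard matrices. -/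
open Complex Finset

lemma unimod_conj_mul {z : ℂ} (hz : ‖z‖ = 1) : (starRingEnd ℂ) z * z = 1 := by
  rw [mul_comm, Complex.mul_conj, Complex.normSq_eq_norm_sq, hz]
  norm_num

lemma chm_row_orth {d : ℕ} (H : Matrix (Fin d) (Fin d) ℂ) (hH : IsCHM H) (hd : 0 < d) :
    ∀ i j, i ≠ j → ∑ k, H i k * (starRingEnd ℂ) (H j k) = 0 := by
  have hd0 : (d : ℂ) ≠ 0 := by exact_mod_cast hd.ne'
  have h1 : H.conjTranspose * H = (d : ℂ) • 1 := by
    ext j k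
    simp only [Matrix.mul_apply, Matrix.conjTranspose_apply, Matrix.smul_apply,
      Matrix.one_apply, Complex.star_def]
    by_cases hjk : j = k
    · subst hjk
      simp only [if_pos rfl, smul_eq_mul, mul_one]
      rw [Finset.sum_congr rfl (fun i _ => unimod_conj_mul (hH.1 i j))]
      simp
    · rw [hH.2 j k hjk, if_neg hjk]
      simp
  have h3 : ((d : ℂ)⁻¹ • H.conjTranspose) * H = 1 := by
    rw [Matrix.smul_mul, h1, smul_smul, inv_mul_cancel₀ hd0, one_smul]
  have h4 := mul_eq_one_comm.mp h3
  have h2 : H * H.conjTranspose = (d : ℂ) • 1 := by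
    calc H * H.conjTranspose = (d : ℂ) • (H * ((d : ℂ)⁻¹ • H.conjTranspose)) := by
          rw [Matrix.mul_smul, smul_smul, mul_inv_cancel₀ hd0, one_smul]
      _ = (d : ℂ) • 1 := by rw [h4]
  intro i j hij
  have := congrFun (congrFun h2 i) j
  simp only [Matrix.mul_apply, Matrix.conjTranspose_apply, Matrix.smul_apply,
    Matrix.one_apply, if_neg hij, smul_eq_mul, mul_zero, Complex.star_def] at this
  exact this

/-- a complex Hadamard matrix of even order `d = 2m` possessing `m` disjoint
aligned ER pairs of columns and `m` disjoint aligned ER pairs of rows is, after suitable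
row and column permutations, of the block form `[[A, B], [A, -B]]` with `A`, `B`
complex Hadamard matrices of order `m`. -/
theorem aligned_ER_pairs_sylvester (d m : ℕ) (hd : d = 2 * m)
    (H : Matrix (Fin d) (Fin d) ℂ) (hH : IsCHM H)
    (ε δ : Fin d → ℂ)
    (hε : ∀ k, ε k = 1 ∨ ε k = -1) (hδ : ∀ k, δ k = 1 ∨ δ k = -1)
    (gc gr : Fin m × Bool → Fin d)
    (hgc : Function.Injective gc) (hgr : Function.Injective gr)
    (hcols : ∀ (a : Fin m) (k : Fin d),
      (starRingEnd ℂ) (H k (gc (a, false))) * H k (gc (a, true)) = ε k)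
    (hrows : ∀ (a : Fin m) (k : Fin d),
      (starRingEnd ℂ) (H (gr (a, false)) k) * H (gr (a, true)) k = δ k) :
    ∃ A B : Matrix (Fin m) (Fin m) ℂ, IsCHM A ∧ IsCHM B ∧
      ∃ r c : Fin m × Bool → Fin d, Function.Bijective r ∧ Function.Bijective c ∧
        ∀ (i j : Fin m) (b1 b2 : Bool),
          H (r (i, b1)) (c (j, b2)) =
            if b2 = false then A i j else if b1 = false then B i j else -B i j := by
  classical
  subst hd
  have hcard : Fintype.card (Fin m × Bool) = Fintype.card (Fin (2 * m)) := by
    simp [Fintype.card_prod]; ring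
  -- trivial case m = 0
  rcases Nat.eq_zero_or_pos m with hm | hm
  · subst hm
    refine ⟨0, 0, ⟨fun i => i.elim0, fun j k _ => by simp⟩,
      ⟨fun i => i.elim0, fun j k _ => by simp⟩, gr, gc,
      (Fintype.bijective_iff_injective_and_card _).mpr ⟨hgr, hcard⟩,
      (Fintype.bijective_iff_injective_and_card _).mpr ⟨hgc, hcard⟩,
      fun i => i.elim0⟩
  have hdpos : 0 < 2 * m := by omega
  have hrbij : Function.Bijective gr :=
    (Fintype.bijective_iff_injective_and_card _).mpr ⟨hgr, hcard⟩
  have hδrel : ∀ (i : Fin m) (k : Fin (2 * m)),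
      H (gr (i, true)) k = δ k * H (gr (i, false)) k := by
    intro i k
    have h2 : H (gr (i, false)) k * (starRingEnd ℂ) (H (gr (i, false)) k) = 1 := by
      rw [mul_comm]; exact unimod_conj_mul (hH.1 _ _)
    calc H (gr (i, true)) k
        = (H (gr (i, false)) k * (starRingEnd ℂ) (H (gr (i, false)) k)) * H (gr (i, true)) k := by
          rw [h2, one_mul]
      _ = H (gr (i, false)) k * ((starRingEnd ℂ) (H (gr (i, false)) k) * H (gr (i, true)) k) := by
          ring
      _ = δ k * H (gr (i, false)) k := by rw [hrows i k, mul_comm]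
  -- sum of δ is zero
  obtain ⟨a0⟩ : Nonempty (Fin m) := ⟨⟨0, hm⟩⟩
  have hne0 : gr (a0, true) ≠ gr (a0, false) := fun h => by simpa using hgr h
  have hsumδ : ∑ k, δ k = 0 := by
    have h := chm_row_orth H hH hdpos (gr (a0, true)) (gr (a0, false)) hne0
    rw [← h]
    exact Finset.sum_congr rfl fun k _ => by rw [← hrows a0 k]; ring
  -- counting
  set P := Finset.univ.filter (fun k : Fin (2 * m) => δ k = 1) with hP
  set Q := Finset.univ.filter (fun k : Fin (2 * m) => δ k = -1) with hQ
  have hdisj : Disjoint P Q := by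
    rw [Finset.disjoint_filter]
    intro k _ h1 h2
    rw [h1] at h2; norm_num at h2
  have hunion : P ∪ Q = Finset.univ := by
    apply Finset.eq_univ_of_forall
    intro k
    rcases hδ k with h | h
    · exact Finset.mem_union_left _ (Finset.mem_filter.mpr ⟨Finset.mem_univ _, h⟩)
    · exact Finset.mem_union_right _ (Finset.mem_filter.mpr ⟨Finset.mem_univ _, h⟩)
  have hcards : P.card + Q.card = 2 * m := by
    rw [← Finset.card_union_of_disjoint hdisj, hunion, Finset.card_univ, Fintype.card_fin]
  have hPQ : (P.card : ℂ) = (Q.card : ℂ) := by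
    have h1 : ∑ k ∈ P, δ k = (P.card : ℂ) := by
      rw [Finset.sum_congr rfl (fun k hk => (Finset.mem_filter.mp hk).2)]
      simp
      rfl
    have h2 : ∑ k ∈ Q, δ k = -(Q.card : ℂ) := by
      rw [Finset.sum_congr rfl (fun k hk => (Finset.mem_filter.mp hk).2)]
      simp
      rfl
    have h3 : ∑ k ∈ P, δ k + ∑ k ∈ Q, δ k = 0 := by
      rw [← Finset.sum_union hdisj, hunion]; exact hsumδ
    rw [h1, h2] at h3; linear_combination h3
  have hPcard : P.card = m := by
    have := Nat.cast_inj (R := ℂ) |>.mp hPQ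
    omega
  have hQcard : Q.card = m := by omega
  -- build the column bijection
  have eP := Finset.equivFinOfCardEq hPcard
  have eQ := Finset.equivFinOfCardEq hQcard
  set c : Fin m × Bool → Fin (2 * m) :=
    fun p => if p.2 then (eQ.symm p.1 : Fin (2 * m)) else (eP.symm p.1) with hc
  have hcPδ : ∀ j, δ (c (j, false)) = 1 := by
    intro j
    have h := (Finset.mem_filter.mp (eP.symm j).2).2
    simpa [hc] using h
  have hcQδ : ∀ j, δ (c (j, true)) = -1 := by
    intro j
    have h := (Finset.mem_filter.mp (eQ.symm j).2).2
    simpa [hc] using h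
  have hcinj : Function.Injective c := by
    rintro ⟨j, b⟩ ⟨j', b'⟩ h
    cases b <;> cases b'
    · simp only [hc, if_neg Bool.false_ne_true, Bool.false_eq_true, if_false] at h
      have := eP.symm.injective (Subtype.ext h)
      rw [this]
    · exfalso
      have h1 := hcPδ j
      have h2 := hcQδ j'
      rw [show c (j, false) = c (j', true) from h] at h1
      rw [h1] at h2; norm_num at h2
    · exfalso
      have h1 := hcQδ j
      have h2 := hcPδ j'
      rw [show c (j, true) = c (j', false) from h] at h1
      rw [h1] at h2; norm_num at h2
    · simp only [hc, if_pos] at h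
      have := eQ.symm.injective (Subtype.ext h)
      rw [this]
  have hcbij : Function.Bijective c :=
    (Fintype.bijective_iff_injective_and_card _).mpr ⟨hcinj, hcard⟩
  -- key orthogonality lemma for half sums
  have key : ∀ c0 c1 : Fin (2 * m), c0 ≠ c1 → δ c0 = δ c1 →
      ∑ i : Fin m, (starRingEnd ℂ) (H (gr (i, false)) c0) * H (gr (i, false)) c1 = 0 := by
    intro c0 c1 hne hδeq
    have horth := hH.2 c0 c1 hne
    have hre : ∑ p : Fin m × Bool, (starRingEnd ℂ) (H (gr p) c0) * H (gr p) c1 = 0 := by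
      rw [Fintype.sum_bijective gr hrbij _
        (fun i => (starRingEnd ℂ) (H i c0) * H i c1) (fun _ => rfl)]
      exact horth
    rw [Fintype.sum_prod_type] at hre
    have hs : (starRingEnd ℂ) (δ c0) * δ c1 = 1 := by
      rw [hδeq]; rcases hδ c1 with h | h <;> simp [h]
    have hterm : ∀ i : Fin m,
        ∑ b : Bool, (starRingEnd ℂ) (H (gr (i, b)) c0) * H (gr (i, b)) c1 =
        2 * ((starRingEnd ℂ) (H (gr (i, false)) c0) * H (gr (i, false)) c1) := by
      intro i
      rw [Fintype.sum_bool, hδrel i c0, hδrel i c1, map_mul]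
      calc (starRingEnd ℂ) (δ c0) * (starRingEnd ℂ) (H (gr (i, false)) c0) *
            (δ c1 * H (gr (i, false)) c1) +
            (starRingEnd ℂ) (H (gr (i, false)) c0) * H (gr (i, false)) c1
          = ((starRingEnd ℂ) (δ c0) * δ c1) *
              ((starRingEnd ℂ) (H (gr (i, false)) c0) * H (gr (i, false)) c1) +
              (starRingEnd ℂ) (H (gr (i, false)) c0) * H (gr (i, false)) c1 := by ring
        _ = 2 * ((starRingEnd ℂ) (H (gr (i, false)) c0) * H (gr (i, false)) c1) := by
              rw [hs]; ring
    rw [Finset.sum_congr rfl (fun i _ => hterm i), ← Finset.mul_sum] at hre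
    have h2 : (2 : ℂ) ≠ 0 := by norm_num
    exact (mul_eq_zero.mp hre).resolve_left h2
  -- define A and B
  set A : Matrix (Fin m) (Fin m) ℂ := fun i j => H (gr (i, false)) (c (j, false)) with hA
  set B : Matrix (Fin m) (Fin m) ℂ := fun i j => H (gr (i, false)) (c (j, true)) with hB
  have hcne : ∀ (j k : Fin m) (b : Bool), j ≠ k → c (j, b) ≠ c (k, b) := by
    intro j k b hjk h
    exact hjk (by simpa using congrArg Prod.fst (hcinj h))
  refine ⟨A, B, ⟨fun i j => hH.1 _ _, fun j k hjk => ?_⟩,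
    ⟨fun i j => hH.1 _ _, fun j k hjk => ?_⟩, gr, c, hrbij, hcbij, ?_⟩
  · exact key _ _ (hcne j k false hjk) (by rw [hcPδ j, hcPδ k])
  · exact key _ _ (hcne j k true hjk) (by rw [hcQδ j, hcQδ k])
  · intro i j b1 b2
    cases b1 <;> cases b2 <;> simp only [Bool.false_eq_true, Bool.true_eq_false,
      if_true, if_false, if_pos rfl]
    · rfl
    · rfl
    · rw [hδrel, hcPδ j]; simp [hA]
    · rw [hδrel, hcQδ j]; simp [hB]
end

section
/- Let d be odd and let H(ξ) be a continuous one-parameter family of d×d complex Hadamard matrices such that H(ξ) differs from H(0) only in two columns, with those two columns lying in the linear span of the corresponding two columns of H(0) for all ξ. Then H(ξ) is equivalent to H(0) for all ξ (the family is trivial); equivalently, a genuine parameter of a family of complex Hadamard matrices in odd dimension cannot appear in only two columns. -/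
open Complex Finset

/-- Equivalence of complex Hadamard matrices: `A = D₁ P₁ B P₂ D₂` with unitary diagonal
matrices `D₁, D₂` and permutation matrices `P₁, P₂`. -/
def CHMEquiv {d : ℕ} (A B : Matrix (Fin d) (Fin d) ℂ) : Prop :=
  ∃ d1 d2 : Fin d → ℂ,
    (∀ i, ‖d1 i‖ = 1) ∧ (∀ j, ‖d2 j‖ = 1) ∧
    ∃ σ τ : Equiv.Perm (Fin d), ∀ i j, A i j = d1 i * B (σ i) (τ j) * d2 j

lemma key_two_phase {d : ℕ} (hd : Odd d) (ε : Fin d → ℂ)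
    (hε : ∀ j, ‖ε j‖ = 1) (hsum : ∑ j, ε j = 0)
    (x y : ℂ) (hun : ∀ j, ‖x + y * ε j‖ = 1) :
    x = 0 ∨ y = 0 := by
  by_contra hcon
  push_neg at hcon
  obtain ⟨hx, hy⟩ := hcon
  set w : ℂ := (starRingEnd ℂ) x * y with hw_def
  have hw : w ≠ 0 := mul_ne_zero (by simpa using hx) hy
  have hεn : ∀ j, Complex.normSq (ε j) = 1 := fun j => by
    rw [Complex.normSq_eq_norm_sq, hε j, one_pow]
  have hre : ∀ j, (w * ε j).re = (1 - Complex.normSq x - Complex.normSq y) / 2 := by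
    intro j
    have h1 : Complex.normSq (x + y * ε j) = 1 := by
      rw [Complex.normSq_eq_norm_sq, hun j, one_pow]
    rw [Complex.normSq_add, Complex.normSq_mul, hεn j, mul_one] at h1
    have h2 : x * (starRingEnd ℂ) (y * ε j) = (starRingEnd ℂ) (w * ε j) := by
      simp only [map_mul, hw_def, Complex.conj_conj]
      ring
    rw [h2, Complex.conj_re] at h1
    linarith
  have hsum2 : ∑ j, w * ε j = 0 := by rw [← Finset.mul_sum, hsum, mul_zero]
  have hdpos : 0 < d := hd.pos
  have hc : (1 - Complex.normSq x - Complex.normSq y) / 2 = 0 := by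
    have h3 : (∑ j, w * ε j).re = 0 := by rw [hsum2]; rfl
    rw [Complex.re_sum] at h3
    rw [Finset.sum_congr rfl (fun j _ => hre j), Finset.sum_const, Finset.card_univ,
      Fintype.card_fin, nsmul_eq_mul] at h3
    have hd0 : (d : ℝ) ≠ 0 := Nat.cast_ne_zero.mpr hdpos.ne'
    rcases mul_eq_zero.mp h3 with h | h
    · exact absurd h hd0
    · exact h
  have hre0 : ∀ j, (w * ε j).re = 0 := fun j => by rw [hre j, hc]
  set t : ℝ := Real.sqrt (Complex.normSq w) with ht_def
  have ht2 : t ^ 2 = Complex.normSq w := Real.sq_sqrt (Complex.normSq_nonneg w)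
  have ht0 : t ≠ 0 := by
    intro h
    rw [h] at ht2
    exact hw (Complex.normSq_eq_zero.mp (by linarith [ht2.symm] : Complex.normSq w = 0))
  have him : ∀ j, (w * ε j).im = t ∨ (w * ε j).im = -t := by
    intro j
    have h2 : Complex.normSq (w * ε j) = Complex.normSq w := by
      rw [Complex.normSq_mul, hεn j, mul_one]
    have h3 : (w * ε j).im ^ 2 = t ^ 2 := by
      have := Complex.normSq_apply (w * ε j)
      have h4 := hre0 j
      nlinarith [h2, ht2]
    have h5 : ((w * ε j).im - t) * ((w * ε j).im + t) = 0 := by nlinarith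
    rcases mul_eq_zero.mp h5 with h | h
    · left; linarith
    · right; linarith
  have hsumim : ∑ j, (w * ε j).im = 0 := by
    have h3 : (∑ j, w * ε j).im = 0 := by rw [hsum2]; rfl
    rwa [Complex.im_sum] at h3
  set P := Finset.univ.filter (fun j => (w * ε j).im = t) with hP
  have hsplit := Finset.sum_filter_add_sum_filter_not Finset.univ
    (fun j => (w * ε j).im = t) (fun j => (w * ε j).im)
  have hPsum : ∑ j ∈ P, (w * ε j).im = P.card * t := by
    rw [Finset.sum_congr rfl (fun j hj => (Finset.mem_filter.mp hj).2), Finset.sum_const,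
      nsmul_eq_mul]
  set Q := Finset.univ.filter (fun j => ¬ (w * ε j).im = t) with hQ
  have hQsum : ∑ j ∈ Q, (w * ε j).im = Q.card * (-t) := by
    rw [Finset.sum_congr rfl (fun j hj => ((him j).resolve_left (Finset.mem_filter.mp hj).2)),
      Finset.sum_const, nsmul_eq_mul]
  rw [hPsum, hQsum, hsumim] at hsplit
  have hcard : P.card + Q.card = d := by
    rw [hP, hQ, Finset.card_filter_add_card_filter_not, Finset.card_univ,
      Fintype.card_fin]
  have hPQ : (P.card : ℝ) = Q.card := by
    have := hsplit
    have h6 : ((P.card : ℝ) - Q.card) * t = 0 := by ring_nf; ring_nf at this; linarith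
    rcases mul_eq_zero.mp h6 with h | h
    · linarith
    · exact absurd h ht0
  have hPQ' : P.card = Q.card := Nat.cast_injective hPQ
  obtain ⟨k, hk⟩ := hd
  omega

/-- in odd dimension, a complex Hadamard matrix differing from `H` only in
two columns which lie in the span of the corresponding two columns of `H` is equivalent
to `H`: a genuine parameter of a family cannot appear in only two columns. -/
theorem odd_dim_two_column_deformation_trivial (d : ℕ) (hd : Odd d)
    (H H' : Matrix (Fin d) (Fin d) ℂ) (hH : IsCHM H) (hH' : IsCHM H')
    (c1 c2 : Fin d) (hne : c1 ≠ c2)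
    (hsame : ∀ j k, k ≠ c1 → k ≠ c2 → H' j k = H j k)
    (hspan1 : ∃ x y : ℂ, ∀ j, H' j c1 = x * H j c1 + y * H j c2)
    (hspan2 : ∃ x y : ℂ, ∀ j, H' j c2 = x * H j c1 + y * H j c2) :
    CHMEquiv H' H := by
  obtain ⟨x, y, hx1⟩ := hspan1
  obtain ⟨u, v, hx2⟩ := hspan2
  set ε : Fin d → ℂ := fun j => (starRingEnd ℂ) (H j c1) * H j c2 with hε_def
  have hεabs : ∀ j, ‖ε j‖ = 1 := fun j => by
    rw [hε_def]; simp only [norm_mul, Complex.norm_conj, hH.1, mul_one]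
  have hεsum : ∑ j, ε j = 0 := hH.2 c1 c2 hne
  have hmc : ∀ j k, H j k * (starRingEnd ℂ) (H j k) = 1 := fun j k => by
    rw [Complex.mul_conj, Complex.normSq_eq_norm_sq, hH.1 j k, one_pow, Complex.ofReal_one]
  have hfact1 : ∀ j, H j c1 * (x + y * ε j) = H' j c1 := by
    intro j
    rw [hx1 j, hε_def]
    calc H j c1 * (x + y * ((starRingEnd ℂ) (H j c1) * H j c2))
        = x * H j c1 + y * (H j c1 * (starRingEnd ℂ) (H j c1)) * H j c2 := by ring
      _ = x * H j c1 + y * H j c2 := by rw [hmc j c1]; ring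
  have hfact2 : ∀ j, H j c1 * (u + v * ε j) = H' j c2 := by
    intro j
    rw [hx2 j, hε_def]
    calc H j c1 * (u + v * ((starRingEnd ℂ) (H j c1) * H j c2))
        = u * H j c1 + v * (H j c1 * (starRingEnd ℂ) (H j c1)) * H j c2 := by ring
      _ = u * H j c1 + v * H j c2 := by rw [hmc j c1]; ring
  have hun1 : ∀ j, ‖x + y * ε j‖ = 1 := by
    intro j
    have h := hH'.1 j c1
    rwa [← hfact1 j, norm_mul, hH.1 j c1, one_mul] at h
  have hun2 : ∀ j, ‖u + v * ε j‖ = 1 := by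
    intro j
    have h := hH'.1 j c2
    rwa [← hfact2 j, norm_mul, hH.1 j c1, one_mul] at h
  have hxy := key_two_phase hd ε hεabs hεsum x y hun1
  have huv := key_two_phase hd ε hεabs hεsum u v hun2
  have j0 : Fin d := ⟨0, hd.pos⟩
  have hdd : ∀ k, ∑ j, (starRingEnd ℂ) (H j k) * H j k = (d : ℂ) := by
    intro k
    have h1 : ∀ j, (starRingEnd ℂ) (H j k) * H j k = 1 := fun j => by
      rw [mul_comm]; exact hmc j k
    rw [Finset.sum_congr rfl (fun j _ => h1 j), Finset.sum_const, Finset.card_univ,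
      Fintype.card_fin, nsmul_eq_mul, mul_one]
  have hdC : (d : ℂ) ≠ 0 := Nat.cast_ne_zero.mpr hd.pos.ne'
  have ho := hH'.2 c1 c2 hne
  rcases hxy with hx0 | hy0 <;> rcases huv with hu0 | hv0
  · -- x = 0, u = 0 : contradiction
    have hy1 : ‖y‖ = 1 := by
      have h := hun1 j0; rwa [hx0, zero_add, norm_mul, hεabs j0, mul_one] at h
    have hv1 : ‖v‖ = 1 := by
      have h := hun2 j0; rwa [hu0, zero_add, norm_mul, hεabs j0, mul_one] at h
    have hoeq : ∑ j, (starRingEnd ℂ) (H' j c1) * H' j c2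
        = (starRingEnd ℂ) y * v * (d : ℂ) := by
      rw [← hdd c2, Finset.mul_sum]
      refine Finset.sum_congr rfl fun j _ => ?_
      simp only [hx1 j, hx2 j, hx0, hu0, zero_mul, zero_add, map_mul]
      ring
    rw [hoeq] at ho
    rcases mul_eq_zero.mp ho with h | h
    · rcases mul_eq_zero.mp h with h' | h'
      · rw [map_eq_zero] at h'; rw [h'] at hy1; simp at hy1
      · rw [h'] at hv1; simp at hv1
    · exact absurd h hdC
  · -- x = 0, v = 0 : swap case
    have hy1 : ‖y‖ = 1 := by
      have h := hun1 j0; rwa [hx0, zero_add, norm_mul, hεabs j0, mul_one] at h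
    have hu1 : ‖u‖ = 1 := by
      have h := hun2 j0; rwa [hv0, zero_mul, add_zero] at h
    refine ⟨fun _ => 1, fun j => if j = c1 then y else if j = c2 then u else 1,
      fun i => by simp, ?_, Equiv.refl _, Equiv.swap c1 c2, ?_⟩
    · intro j
      dsimp only
      split_ifs <;> simp [hy1, hu1]
    · intro i j
      simp only [Equiv.refl_apply, one_mul]
      by_cases hj1 : j = c1
      · subst hj1
        rw [Equiv.swap_apply_left, if_pos rfl, hx1 i, hx0]
        ring
      · by_cases hj2 : j = c2
        · subst hj2
          rw [Equiv.swap_apply_right, if_neg hj1, if_pos rfl, hx2 i, hv0]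
          ring
        · rw [Equiv.swap_apply_of_ne_of_ne hj1 hj2, if_neg hj1, if_neg hj2,
            hsame i j hj1 hj2, mul_one]
  · -- y = 0, u = 0 : identity case
    have hx1' : ‖x‖ = 1 := by
      have h := hun1 j0; rwa [hy0, zero_mul, add_zero] at h
    have hv1 : ‖v‖ = 1 := by
      have h := hun2 j0; rwa [hu0, zero_add, norm_mul, hεabs j0, mul_one] at h
    refine ⟨fun _ => 1, fun j => if j = c1 then x else if j = c2 then v else 1,
      fun i => by simp, ?_, Equiv.refl _, Equiv.refl _, ?_⟩
    · intro j
      dsimp only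
      split_ifs <;> simp [hx1', hv1]
    · intro i j
      simp only [Equiv.refl_apply, one_mul]
      by_cases hj1 : j = c1
      · subst hj1
        rw [if_pos rfl, hx1 i, hy0]
        ring
      · by_cases hj2 : j = c2
        · subst hj2
          rw [if_neg hj1, if_pos rfl, hx2 i, hu0]
          ring
        · rw [if_neg hj1, if_neg hj2, hsame i j hj1 hj2, mul_one]
  · -- y = 0, v = 0 : contradiction
    have hx1' : ‖x‖ = 1 := by
      have h := hun1 j0; rwa [hy0, zero_mul, add_zero] at h
    have hu1 : ‖u‖ = 1 := by
      have h := hun2 j0; rwa [hv0, zero_mul, add_zero] at h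
    have hoeq : ∑ j, (starRingEnd ℂ) (H' j c1) * H' j c2
        = (starRingEnd ℂ) x * u * (d : ℂ) := by
      rw [← hdd c1, Finset.mul_sum]
      refine Finset.sum_congr rfl fun j _ => ?_
      simp only [hx1 j, hx2 j, hy0, hv0, zero_mul, add_zero, map_mul]
      ring
    rw [hoeq] at ho
    rcases mul_eq_zero.mp ho with h | h
    · rcases mul_eq_zero.mp h with h' | h'
      · rw [map_eq_zero] at h'; rw [h'] at hx1'; simp at hx1'
      · rw [h'] at hu1; simp at hu1
    · exact absurd h hdC
end

section
/- If H_1 and H_2 are inequivalent real Hadamard matrices of the same order d, then the affine families of complex Hadamard matrices stemming from them via the ER-pair construction are inequivalent: no member of the family stemming from H_1 is equivalent to H_2. -/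
open Complex Finset

private lemma sgnMul {a b : ℂ} (ha : a = 1 ∨ a = -1) (hb : b = 1 ∨ b = -1) :
    a * b = 1 ∨ a * b = -1 := by
  rcases ha with h | h <;> rcases hb with h' | h' <;> rw [h, h'] <;> norm_num

private lemma sgnNeZero {a : ℂ} (ha : a = 1 ∨ a = -1) : a ≠ 0 := by
  rcases ha with h | h <;> rw [h] <;> norm_num

private lemma exp_neg_one_mul (z : ℂ) : cexp (I * (-1) * z) = (cexp (I * z))⁻¹ := by
  rw [show I * (-1) * z = -(I * z) by ring, Complex.exp_neg]

private lemma exp_sign_one {s : ℂ} (hs : s = 1 ∨ s = -1) (z : ℂ)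
    (h : cexp (I * z) ^ 2 = 1) : cexp (I * s * z) = cexp (I * z) := by
  rcases hs with h' | h'
  · rw [h', show I * 1 * z = I * z by ring]
  · rw [h', exp_neg_one_mul]
    exact inv_eq_of_mul_eq_one_right (by linear_combination h)

private lemma exp_sign_neg {s : ℂ} (hs : s = 1 ∨ s = -1) (z : ℂ)
    (h : cexp (I * z) ^ 2 = -1) : cexp (I * s * z) = s * cexp (I * z) := by
  rcases hs with h' | h'
  · rw [h', show I * 1 * z = I * z by ring, one_mul]
  · rw [h', exp_neg_one_mul]
    have hne := Complex.exp_ne_zero (I * z)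
    field_simp
    linear_combination h

private lemma abs_exp_sgnMul {s : ℂ} (hs : s = 1 ∨ s = -1) (μ : ℝ) :
    ‖cexp (I * s * (μ : ℂ))‖ = 1 := by
  rcases hs with h | h <;> rw [h] <;> simp [Complex.norm_exp]

private lemma solve_rel {P Q D W1 W2 A1 A2 X Y : ℂ} (hW2 : W2 ≠ 0)
    (hA1 : A1 * A1 = 1) (hA2 : A2 * A2 = 1) (hX : X * X = 1) (hY : Y * Y = 1)
    (E1 : P * A1 = D * Y * W1) (E2 : Q * A2 = D * X * W2) :
    P = Q * (A1 * A2 * X * Y) * (W1 * W2⁻¹) := by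
  have h : P * W2 = Q * (A1 * A2 * X * Y) * W1 := by
    linear_combination (A1 * W2) * E1 - (A1 * Y * W1 * X) * E2 - (P * W2) * hA1
      - (A1 * Y * W1 * D * W2) * hX
  field_simp
  linear_combination h

private lemma exp_line {d : ℕ} (μ : ℝ) (δ s : Fin d → ℂ) (w : ℂ)
    (hδ : ∀ j, δ j = 1 ∨ δ j = -1)
    (h1 : ∃ j, δ j = 1) (hm : ∃ j, δ j = -1)
    (hs : ∀ j, s j = 1 ∨ s j = -1) (hw : w ≠ 0)
    (hrel : ∀ j, cexp (I * δ j * (μ : ℂ)) = s j * w) :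
    cexp (I * (μ : ℂ)) ^ 2 = 1 ∨ cexp (I * (μ : ℂ)) ^ 2 = -1 := by
  obtain ⟨jp, hjp⟩ := h1
  obtain ⟨jm, hjm⟩ := hm
  have e1 : cexp (I * (μ : ℂ)) = s jp * w := by
    have h := hrel jp; rw [hjp, show I * 1 * (μ : ℂ) = I * μ by ring] at h; exact h
  have e2 : (cexp (I * (μ : ℂ)))⁻¹ = s jm * w := by
    have h := hrel jm; rw [hjm, exp_neg_one_mul] at h; exact h
  have e3 : (s jp * w) * (s jm * w) = 1 := by
    rw [← e1, ← e2]; exact mul_inv_cancel₀ (Complex.exp_ne_zero _)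
  have e4 : cexp (I * (μ : ℂ)) ^ 2 = (s jp * w) ^ 2 := by rw [e1]
  rcases hs jp with h | h
  · rcases hs jm with h' | h'
    · rw [h, h'] at e3; rw [h] at e4; left; rw [e4]; linear_combination e3
    · rw [h, h'] at e3; rw [h] at e4; right; rw [e4]; linear_combination -e3
  · rcases hs jm with h' | h'
    · rw [h, h'] at e3; rw [h] at e4; right; rw [e4]; linear_combination -e3
    · rw [h, h'] at e3; rw [h] at e4; left; rw [e4]; linear_combination e3

private lemma exists_same {d : ℕ} (ε δ : Fin d → ℂ)
    (hε : ∀ j, ε j = 1 ∨ ε j = -1) (hδ : ∀ j, δ j = 1 ∨ δ j = -1)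
    (hδ1 : ∃ j, δ j = 1) (hδm : ∃ j, δ j = -1)
    {j1 j2 : Fin d} (h1 : ε j1 ≠ δ j1) (h2 : ε j2 = δ j2) :
    ∃ jA jB, ε jA = ε jB ∧ δ jA ≠ δ jB := by
  by_contra hcon
  push_neg at hcon
  -- hcon : ∀ jA jB, ε jA = ε jB → δ jA = δ jB
  have hne12 : ε j1 ≠ ε j2 := by
    intro h
    exact h1 ((h.trans h2).trans (hcon j1 j2 h).symm)
  -- pick jm with δ jm = -δ j1
  have hδj1 : δ j1 = -ε j1 := by
    rcases hε j1 with ha | ha <;> rcases hδ j1 with hb | hb <;>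
      grind
  have hεj2 : ε j2 = -ε j1 := by
    rcases hε j1 with ha | ha <;> rcases hε j2 with hb | hb <;>
      grind
  obtain ⟨jm, hjm⟩ : ∃ jm, δ jm = -δ j1 := by
    rcases hδ j1 with hb | hb
    · obtain ⟨j, hj⟩ := hδm; exact ⟨j, by rw [hj, hb]⟩
    · obtain ⟨j, hj⟩ := hδ1; exact ⟨j, by rw [hj, hb]; norm_num⟩
  have hεjm : ε jm = ε j1 ∨ ε jm = ε j2 := by
    rcases hε jm with ha | ha <;> rcases hε j1 with hb | hb <;>
      norm_num [ha, hb, hεj2]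
  rcases hεjm with h | h
  · have := hcon jm j1 h
    rw [hjm] at this
    rcases hδ j1 with hb | hb <;> rw [hb] at this <;> norm_num at this
  · have := hcon jm j2 h
    rw [hjm, ← h2, hεj2, hδj1] at this
    rcases hε j1 with hb | hb <;> rw [hb] at this <;> norm_num at this

private lemma abs_exp_I_mul_real (μ : ℝ) : ‖cexp (I * (μ : ℂ))‖ = 1 := by
  simp [Complex.norm_exp]

private lemma sq_eq_pm {Q : ℂ} (h : Q ^ 4 = 1) : Q ^ 2 = 1 ∨ Q ^ 2 = -1 := by
  rcases mul_eq_zero.mp (show (Q ^ 2 - 1) * (Q ^ 2 + 1) = 0 by linear_combination h) with h' | h'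
  · left; linear_combination h'
  · right; linear_combination h'

private lemma pair_claim {d : ℕ} (θ η : ℝ) (ε δ s : Fin d → ℂ) (w : ℂ)
    (hε : ∀ j, ε j = 1 ∨ ε j = -1) (hδ : ∀ j, δ j = 1 ∨ δ j = -1)
    (hε1 : ∃ j, ε j = 1) (hεm : ∃ j, ε j = -1)
    (hδb : ((∃ j, δ j = 1) ∧ (∃ j, δ j = -1)) ∨ ((∀ j, δ j = 1) ∧ η = 0))
    (hs : ∀ j, s j = 1 ∨ s j = -1) (hw : w ≠ 0)
    (hrel : ∀ j, cexp (I * ε j * (θ : ℂ)) = cexp (I * δ j * (η : ℂ)) * s j * w)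
    (y : Bool) (hy : y = true ↔ cexp (I * (η : ℂ)) ^ 2 = -1) :
    ∃ (x : Bool) (c : ℂ), ‖c‖ = 1 ∧
      ∀ j, cexp (I * ε j * (θ : ℂ)) =
        cexp (I * δ j * (η : ℂ)) * (if y then δ j else 1) * (if x then ε j else 1) * c := by
  rcases hδb with ⟨hδ1, hδm⟩ | ⟨hδone, hη0⟩
  · by_cases hdeg : ∀ j, ε j = δ j
    · -- ε = δ pointwise
      have hexp : ∀ j, cexp (I * ε j * (θ : ℂ)) =
          cexp (I * δ j * (η : ℂ)) * cexp (I * δ j * ((θ - η : ℝ) : ℂ)) := by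
        intro j; rw [hdeg j, ← Complex.exp_add]; congr 1; push_cast; ring
      have hrel2 : ∀ j, cexp (I * δ j * ((θ - η : ℝ) : ℂ)) = s j * w := by
        intro j
        have h := hrel j
        rw [hexp j] at h
        exact mul_left_cancel₀ (Complex.exp_ne_zero _) (h.trans (mul_assoc _ _ _))
      obtain hR | hR := exp_line (θ - η) δ s w hδ hδ1 hδm hs hw hrel2
      · cases y
        · refine ⟨false, cexp (I * ((θ - η : ℝ) : ℂ)), abs_exp_I_mul_real _, fun j => ?_⟩
          rw [hexp j, exp_sign_one (hδ j) _ hR]; simp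
        · refine ⟨true, cexp (I * ((θ - η : ℝ) : ℂ)), abs_exp_I_mul_real _, fun j => ?_⟩
          rw [hexp j, exp_sign_one (hδ j) _ hR, hdeg j]
          rcases hδ j with h | h <;> rw [h] <;> simp <;> ring
      · cases y
        · refine ⟨true, cexp (I * ((θ - η : ℝ) : ℂ)), abs_exp_I_mul_real _, fun j => ?_⟩
          rw [hexp j, exp_sign_neg (hδ j) _ hR, hdeg j]; simp; ring
        · refine ⟨false, cexp (I * ((θ - η : ℝ) : ℂ)), abs_exp_I_mul_real _, fun j => ?_⟩
          rw [hexp j, exp_sign_neg (hδ j) _ hR]; simp; ring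
    · by_cases hdeg' : ∀ j, ε j = -δ j
      · -- ε = -δ pointwise
        have hexp : ∀ j, cexp (I * ε j * (θ : ℂ)) =
            cexp (I * δ j * (η : ℂ)) * cexp (I * δ j * ((-(θ + η) : ℝ) : ℂ)) := by
          intro j; rw [hdeg' j, ← Complex.exp_add]; congr 1; push_cast; ring
        have hrel2 : ∀ j, cexp (I * δ j * ((-(θ + η) : ℝ) : ℂ)) = s j * w := by
          intro j
          have h := hrel j
          rw [hexp j] at h
          exact mul_left_cancel₀ (Complex.exp_ne_zero _) (h.trans (mul_assoc _ _ _))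
        obtain hR | hR := exp_line (-(θ + η)) δ s w hδ hδ1 hδm hs hw hrel2
        · cases y
          · refine ⟨false, cexp (I * ((-(θ + η) : ℝ) : ℂ)), abs_exp_I_mul_real _, fun j => ?_⟩
            rw [hexp j, exp_sign_one (hδ j) _ hR]; simp
          · refine ⟨true, -cexp (I * ((-(θ + η) : ℝ) : ℂ)), by simpa using abs_exp_I_mul_real (-(θ + η)), fun j => ?_⟩
            rw [hexp j, exp_sign_one (hδ j) _ hR, hdeg' j]
            rcases hδ j with h | h <;> rw [h] <;> simp <;> ring
        · cases y
          · refine ⟨true, -cexp (I * ((-(θ + η) : ℝ) : ℂ)), by simpa using abs_exp_I_mul_real (-(θ + η)), fun j => ?_⟩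
            rw [hexp j, exp_sign_neg (hδ j) _ hR, hdeg' j]
            rcases hδ j with h | h <;> rw [h] <;> simp <;> ring
          · refine ⟨false, cexp (I * ((-(θ + η) : ℝ) : ℂ)), abs_exp_I_mul_real _, fun j => ?_⟩
            rw [hexp j, exp_sign_neg (hδ j) _ hR]
            rcases hδ j with h | h <;> rw [h] <;> simp <;> ring
      · -- generic case
        push_neg at hdeg hdeg'
        obtain ⟨j1, h1⟩ := hdeg
        obtain ⟨j2, h2'⟩ := hdeg'
        have h2 : ε j2 = δ j2 := by
          rcases hε j2 with ha | ha <;> rcases hδ j2 with hb | hb <;>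
            grind
        have hsq : ∀ j, cexp (I * ε j * (θ : ℂ)) ^ 2 = cexp (I * δ j * (η : ℂ)) ^ 2 * w ^ 2 := by
          intro j; rw [hrel j]; rcases hs j with h | h <;> rw [h] <;> ring
        -- Q^2 = ±1
        have hQ2 : cexp (I * (η : ℂ)) ^ 2 = 1 ∨ cexp (I * (η : ℂ)) ^ 2 = -1 := by
          obtain ⟨jA, jB, hee, hdd⟩ := exists_same ε δ hε hδ hδ1 hδm h1 h2
          have hA := hsq jA
          rw [hee] at hA
          have hQQ : cexp (I * δ jA * (η : ℂ)) ^ 2 = cexp (I * δ jB * (η : ℂ)) ^ 2 :=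
            mul_right_cancel₀ (pow_ne_zero 2 hw) (hA.symm.trans (hsq jB))
          apply sq_eq_pm
          have hne := Complex.exp_ne_zero (I * (η : ℂ))
          rcases hδ jA with ha | ha <;> rcases hδ jB with hb | hb
          · exact absurd (ha.trans hb.symm) hdd
          · rw [ha, hb, show I * (1:ℂ) * (η:ℂ) = I * η by ring, exp_neg_one_mul] at hQQ
            field_simp at hQQ
            linear_combination hQQ
          · rw [ha, hb, show I * (1:ℂ) * (η:ℂ) = I * η by ring, exp_neg_one_mul] at hQQ
            field_simp at hQQ
            linear_combination -hQQ
          · exact absurd (ha.trans hb.symm) hdd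
        -- P^2 = ±1
        have hP2 : cexp (I * (θ : ℂ)) ^ 2 = 1 ∨ cexp (I * (θ : ℂ)) ^ 2 = -1 := by
          obtain ⟨jA, jB, hee, hdd⟩ := exists_same δ ε hδ hε hε1 hεm (Ne.symm h1) h2.symm
          have hA := hsq jA
          rw [hee] at hA
          have hPP : cexp (I * ε jA * (θ : ℂ)) ^ 2 = cexp (I * ε jB * (θ : ℂ)) ^ 2 :=
            hA.trans (hsq jB).symm
          apply sq_eq_pm
          have hne := Complex.exp_ne_zero (I * (θ : ℂ))
          rcases hε jA with ha | ha <;> rcases hε jB with hb | hb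
          · exact absurd (ha.trans hb.symm) hdd
          · rw [ha, hb, show I * (1:ℂ) * (θ:ℂ) = I * θ by ring, exp_neg_one_mul] at hPP
            field_simp at hPP
            linear_combination hPP
          · rw [ha, hb, show I * (1:ℂ) * (θ:ℂ) = I * θ by ring, exp_neg_one_mul] at hPP
            field_simp at hPP
            linear_combination -hPP
          · exact absurd (ha.trans hb.symm) hdd
        have hQne := Complex.exp_ne_zero (I * (η : ℂ))
        have habs : ‖cexp (I * (θ : ℂ)) * (cexp (I * (η : ℂ)))⁻¹‖ = 1 := by
          rw [norm_mul, norm_inv, abs_exp_I_mul_real, abs_exp_I_mul_real]; norm_num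
        rcases hQ2 with hQ | hQ
        · have hyf : y = false := by
            cases y
            · rfl
            · exact absurd (hy.mp rfl) (by rw [hQ]; norm_num)
          subst hyf
          rcases hP2 with hP | hP
          · refine ⟨false, cexp (I * (θ : ℂ)) * (cexp (I * (η : ℂ)))⁻¹, habs, fun j => ?_⟩
            rw [exp_sign_one (hε j) _ hP, exp_sign_one (hδ j) _ hQ]
            simp; field_simp
          · refine ⟨true, cexp (I * (θ : ℂ)) * (cexp (I * (η : ℂ)))⁻¹, habs, fun j => ?_⟩
            rw [exp_sign_neg (hε j) _ hP, exp_sign_one (hδ j) _ hQ]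
            simp; field_simp
        · have hyt : y = true := hy.mpr hQ
          subst hyt
          rcases hP2 with hP | hP
          · refine ⟨false, cexp (I * (θ : ℂ)) * (cexp (I * (η : ℂ)))⁻¹, habs, fun j => ?_⟩
            rw [exp_sign_one (hε j) _ hP, exp_sign_neg (hδ j) _ hQ]
            rcases hδ j with h | h <;> rw [h] <;> simp <;> field_simp <;> ring
          · refine ⟨true, cexp (I * (θ : ℂ)) * (cexp (I * (η : ℂ)))⁻¹, habs, fun j => ?_⟩
            rw [exp_sign_neg (hε j) _ hP, exp_sign_neg (hδ j) _ hQ]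
            rcases hδ j with h | h <;> rw [h] <;> simp <;> field_simp <;> ring
  · -- δ ≡ 1, η = 0
    have hQn : ¬ (cexp (I * (η : ℂ)) ^ 2 = -1) := by
      rw [hη0]; norm_num
    have hyf : y = false := by
      cases y
      · rfl
      · exact absurd (hy.mp rfl) hQn
    subst hyf
    have hrel' : ∀ j, cexp (I * ε j * (θ : ℂ)) = s j * w := by
      intro j
      have h := hrel j
      rw [hδone j, hη0] at h
      simpa using h
    obtain hP | hP := exp_line θ ε s w hε hε1 hεm hs hw hrel'
    · refine ⟨false, cexp (I * (θ : ℂ)), abs_exp_I_mul_real _, fun j => ?_⟩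
      rw [exp_sign_one (hε j) _ hP, hδone j, hη0]
      simp
    · refine ⟨true, cexp (I * (θ : ℂ)), abs_exp_I_mul_real _, fun j => ?_⟩
      rw [exp_sign_neg (hε j) _ hP, hδone j, hη0]
      simp

private lemma sgnSq {a : ℂ} (ha : a = 1 ∨ a = -1) : a * a = 1 := by
  rcases ha with h | h <;> rw [h] <;> norm_num

private lemma sgnMulR {a b : ℝ} (ha : a = 1 ∨ a = -1) (hb : b = 1 ∨ b = -1) :
    a * b = 1 ∨ a * b = -1 := by
  rcases ha with h | h <;> rcases hb with h' | h' <;> rw [h, h'] <;> norm_num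

/-- if `H₁` and `H₂` are inequivalent real Hadamard matrices of order `d`,
then no member of the affine family stemming from `H₁` via the ER-pair construction is
equivalent to `H₂`. -/
theorem inequivalent_real_hadamard_families (d m : ℕ)
    (H1 H2 : Matrix (Fin d) (Fin d) ℝ)
    (h1ent : ∀ i j, H1 i j = 1 ∨ H1 i j = -1)
    (h1orth : ∀ j k, j ≠ k → ∑ i, H1 i j * H1 i k = 0)
    (h2ent : ∀ i j, H2 i j = 1 ∨ H2 i j = -1)
    (h2orth : ∀ j k, j ≠ k → ∑ i, H2 i j * H2 i k = 0)
    (hineq : ¬ CHMEquiv (H1.map fun x => (x : ℂ)) (H2.map fun x => (x : ℂ)))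
    (g : Fin m × Bool → Fin d) (hg : Function.Injective g)
    (M : (Fin m → ℝ) → Matrix (Fin d) (Fin d) ℂ)
    (hM1 : ∀ (ξ : Fin m → ℝ) (j k : Fin d),
      (∀ a b, g (a, b) ≠ k) → M ξ j k = (H1 j k : ℂ))
    (hM2 : ∀ (ξ : Fin m → ℝ) (j : Fin d) (a : Fin m) (b : Bool),
      M ξ j (g (a, b)) =
        Complex.exp (Complex.I * ((H1 j (g (a, false)) * H1 j (g (a, true)) : ℝ) : ℂ)
            * (ξ a : ℂ)) * ((H1 j (g (a, b)) : ℝ) : ℂ)) :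
    ∀ ξ : Fin m → ℝ, ¬ CHMEquiv (M ξ) (H2.map fun x => (x : ℂ)) := by
  classical
  intro ξ hCH
  apply hineq
  obtain ⟨d1, d2, hd1, hd2, σ, τ, heq⟩ := hCH
  rcases Nat.eq_zero_or_pos d with hd0 | hdpos
  · subst hd0
    exact ⟨fun i => 1, fun j => 1, fun i => i.elim0, fun j => j.elim0,
      Equiv.refl _, Equiv.refl _, fun i => i.elim0⟩
  -- basic sign facts
  have h1sign : ∀ j k, ((H1 j k : ℝ) : ℂ) = 1 ∨ ((H1 j k : ℝ) : ℂ) = -1 := by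
    intro j k; rcases h1ent j k with h | h <;> rw [h] <;> norm_num
  have h2sign : ∀ j k, ((H2 j k : ℝ) : ℂ) = 1 ∨ ((H2 j k : ℝ) : ℂ) = -1 := by
    intro j k; rcases h2ent j k with h | h <;> rw [h] <;> norm_num
  have hεsign : ∀ (a : Fin m) (j : Fin d),
      ((H1 j (g (a, false)) * H1 j (g (a, true)) : ℝ) : ℂ) = 1 ∨
      ((H1 j (g (a, false)) * H1 j (g (a, true)) : ℝ) : ℂ) = -1 := by
    intro a j
    rcases sgnMulR (h1ent j (g (a, false))) (h1ent j (g (a, true))) with h | h <;>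
      rw [h] <;> norm_num
  have hd2ne : ∀ k, d2 k ≠ 0 := by
    intro k h
    have := hd2 k
    rw [h] at this
    simp at this
  have hMeq : ∀ j k, M ξ j k = d1 j * ((H2 (σ j) (τ k) : ℝ) : ℂ) * d2 k := by
    intro j k; simpa [Matrix.map_apply] using heq j k
  have R2 : ∀ (a : Fin m) (b : Bool) (j : Fin d),
      cexp (I * ((H1 j (g (a, false)) * H1 j (g (a, true)) : ℝ) : ℂ) * ((ξ a : ℝ) : ℂ)) *
        ((H1 j (g (a, b)) : ℝ) : ℂ) =
      d1 j * ((H2 (σ j) (τ (g (a, b))) : ℝ) : ℂ) * d2 (g (a, b)) := by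
    intro a b j
    rw [← hM2 ξ j a b]
    exact hMeq j (g (a, b))
  -- balancedness of column pair products
  have hbalR : ∀ a : Fin m, (∃ j, H1 j (g (a, false)) * H1 j (g (a, true)) = 1) ∧
      (∃ j, H1 j (g (a, false)) * H1 j (g (a, true)) = -1) := by
    intro a
    have hne : g (a, false) ≠ g (a, true) := by
      intro h
      simpa using hg h
    have hsum := h1orth _ _ hne
    constructor
    · by_contra hcon
      push_neg at hcon
      have hall : ∀ j, H1 j (g (a, false)) * H1 j (g (a, true)) = -1 := by
        intro j
        rcases sgnMulR (h1ent j (g (a, false))) (h1ent j (g (a, true))) with h | h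
        · exact absurd h (hcon j)
        · exact h
      rw [Finset.sum_congr rfl fun j _ => hall j] at hsum
      simp at hsum
      omega
    · by_contra hcon
      push_neg at hcon
      have hall : ∀ j, H1 j (g (a, false)) * H1 j (g (a, true)) = 1 := by
        intro j
        rcases sgnMulR (h1ent j (g (a, false))) (h1ent j (g (a, true))) with h | h
        · exact h
        · exact absurd h (hcon j)
      rw [Finset.sum_congr rfl fun j _ => hall j] at hsum
      simp at hsum
      omega
  have hbal : ∀ a : Fin m,
      (∃ j, ((H1 j (g (a, false)) * H1 j (g (a, true)) : ℝ) : ℂ) = 1) ∧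
      (∃ j, ((H1 j (g (a, false)) * H1 j (g (a, true)) : ℝ) : ℂ) = -1) := by
    intro a
    obtain ⟨⟨j1, hj1⟩, ⟨j2, hj2⟩⟩ := hbalR a
    exact ⟨⟨j1, by exact_mod_cast congrArg (fun t : ℝ => (t : ℂ)) hj1⟩,
      ⟨j2, by exact_mod_cast congrArg (fun t : ℝ => (t : ℂ)) hj2⟩⟩
  -- the swap identity
  have hswap : ∀ (a : Fin m) (b : Bool) (j : Fin d),
      ((H1 j (g (a, false)) * H1 j (g (a, true)) : ℝ) : ℂ) * ((H1 j (g (a, b)) : ℝ) : ℂ) =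
      ((H1 j (g (a, !b)) : ℝ) : ℂ) := by
    intro a b j
    have hR : (H1 j (g (a, false)) * H1 j (g (a, true))) * H1 j (g (a, b)) =
        H1 j (g (a, !b)) := by
      cases b
      · rcases h1ent j (g (a, false)) with h | h <;> rw [h] <;> show _ = H1 j (g (a, true)) <;> ring
      · rcases h1ent j (g (a, true)) with h | h <;> rw [h] <;> show _ = H1 j (g (a, false)) <;> ring
    push_cast
    exact_mod_cast congrArg (fun t : ℝ => (t : ℂ)) hR
  -- unified package
  have package : ∃ (δ : Fin d → ℂ) (η : ℝ) (y : Bool),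
      (∀ j, δ j = 1 ∨ δ j = -1) ∧
      (y = true ↔ cexp (I * (η : ℂ)) ^ 2 = -1) ∧
      ((∃ k : Fin d, ∀ a b, g (a, b) ≠ k) →
        ∀ j, cexp (I * δ j * (η : ℂ)) * (if y then δ j else 1) = 1) ∧
      (∀ a : Fin m, ∃ (x : Bool) (c : ℂ), ‖c‖ = 1 ∧ ∀ j,
        cexp (I * ((H1 j (g (a, false)) * H1 j (g (a, true)) : ℝ) : ℂ) * ((ξ a : ℝ) : ℂ)) =
          cexp (I * δ j * (η : ℂ)) * (if y then δ j else 1) *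
            (if x then ((H1 j (g (a, false)) * H1 j (g (a, true)) : ℝ) : ℂ) else 1) * c) := by
    by_cases hcov : ∀ k : Fin d, ∃ p : Fin m × Bool, g p = k
    · -- all columns are covered by ER pairs
      obtain ⟨p0, hp0⟩ := hcov ⟨0, hdpos⟩
      obtain ⟨y, hy⟩ : ∃ y : Bool, (y = true ↔ cexp (I * ((ξ p0.1 : ℝ) : ℂ)) ^ 2 = -1) := by
        by_cases h : cexp (I * ((ξ p0.1 : ℝ) : ℂ)) ^ 2 = -1
        · exact ⟨true, by simp [h]⟩
        · exact ⟨false, by simp [h]⟩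
      refine ⟨fun j => ((H1 j (g (p0.1, false)) * H1 j (g (p0.1, true)) : ℝ) : ℂ), ξ p0.1, y,
        fun j => hεsign p0.1 j, hy, ?_, ?_⟩
      · intro hbad j
        obtain ⟨k, hk⟩ := hbad
        obtain ⟨q, hq⟩ := hcov k
        exact absurd hq (hk q.1 q.2)
      · intro a
        have hrel : ∀ j,
            cexp (I * ((H1 j (g (a, false)) * H1 j (g (a, true)) : ℝ) : ℂ) * ((ξ a : ℝ) : ℂ)) =
            cexp (I * ((H1 j (g (p0.1, false)) * H1 j (g (p0.1, true)) : ℝ) : ℂ) * ((ξ p0.1 : ℝ) : ℂ)) *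
              (((H1 j (g (a, false)) : ℝ) : ℂ) * ((H1 j (g (p0.1, false)) : ℝ) : ℂ) *
                ((H2 (σ j) (τ (g (p0.1, false))) : ℝ) : ℂ) * ((H2 (σ j) (τ (g (a, false))) : ℝ) : ℂ)) *
              (d2 (g (a, false)) * (d2 (g (p0.1, false)))⁻¹) := by
          intro j
          exact solve_rel (hd2ne _) (sgnSq (h1sign j _)) (sgnSq (h1sign j _))
            (sgnSq (h2sign _ _)) (sgnSq (h2sign _ _)) (R2 a false j) (R2 p0.1 false j)
        exact pair_claim (ξ a) (ξ p0.1) _ _ _ _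
          (hεsign a) (hεsign p0.1) (hbal a).1 (hbal a).2 (Or.inl (hbal p0.1))
          (fun j => sgnMul (sgnMul (sgnMul (h1sign j _) (h1sign j _)) (h2sign _ _)) (h2sign _ _))
          (mul_ne_zero (hd2ne _) (inv_ne_zero (hd2ne _))) hrel y hy
    · -- there is an uncovered column
      push_neg at hcov
      obtain ⟨k0, hk0⟩ := hcov
      refine ⟨fun _ => (1 : ℂ), 0, false, fun j => Or.inl rfl, by norm_num, ?_, ?_⟩
      · intro _ j
        simp
      · intro a
        have E2 : ∀ j, cexp (I * (1 : ℂ) * ((0 : ℝ) : ℂ)) * ((H1 j k0 : ℝ) : ℂ) =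
            d1 j * ((H2 (σ j) (τ k0) : ℝ) : ℂ) * d2 k0 := by
          intro j
          rw [show cexp (I * (1 : ℂ) * ((0 : ℝ) : ℂ)) = 1 by simp, one_mul,
            ← hM1 ξ j k0 (fun a b => hk0 (a, b))]
          exact hMeq j k0
        have hrel : ∀ j,
            cexp (I * ((H1 j (g (a, false)) * H1 j (g (a, true)) : ℝ) : ℂ) * ((ξ a : ℝ) : ℂ)) =
            cexp (I * (1 : ℂ) * ((0 : ℝ) : ℂ)) *
              (((H1 j (g (a, false)) : ℝ) : ℂ) * ((H1 j k0 : ℝ) : ℂ) *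
                ((H2 (σ j) (τ k0) : ℝ) : ℂ) * ((H2 (σ j) (τ (g (a, false))) : ℝ) : ℂ)) *
              (d2 (g (a, false)) * (d2 k0)⁻¹) := by
          intro j
          exact solve_rel (hd2ne _) (sgnSq (h1sign j _)) (sgnSq (h1sign j _))
            (sgnSq (h2sign _ _)) (sgnSq (h2sign _ _)) (R2 a false j) (E2 j)
        exact pair_claim (ξ a) 0 _ _ _ _
          (hεsign a) (fun _ => Or.inl rfl) (hbal a).1 (hbal a).2 (Or.inr ⟨fun _ => rfl, rfl⟩)
          (fun j => sgnMul (sgnMul (sgnMul (h1sign j _) (h1sign j _)) (h2sign _ _)) (h2sign _ _))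
          (mul_ne_zero (hd2ne _) (inv_ne_zero (hd2ne _))) hrel false (by norm_num)
  obtain ⟨δ, η, y, hδsign, hy, hres, hclaim⟩ := package
  choose x c hcabs hcrel using hclaim
  -- the pair-swapping permutation
  have hinv : Function.Involutive (fun p : Fin m × Bool => ((p.1, xor (x p.1) p.2) : Fin m × Bool)) := by
    intro p
    simp
  have hπg : ∀ p : Fin m × Bool,
      (Equiv.Perm.viaEmbedding hinv.toPerm ⟨g, hg⟩) (g p) = g (p.1, xor (x p.1) p.2) := by
    intro p
    simpa [Function.Involutive.coe_toPerm] using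
      Equiv.Perm.viaEmbedding_apply hinv.toPerm ⟨g, hg⟩ p
  have hπk : ∀ k : Fin d, (∀ a b, g (a, b) ≠ k) →
      (Equiv.Perm.viaEmbedding hinv.toPerm ⟨g, hg⟩) k = k := by
    intro k hk
    apply Equiv.Perm.viaEmbedding_apply_of_notMem
    rintro ⟨p, rfl⟩
    exact hk p.1 p.2 rfl
  set π : Equiv.Perm (Fin d) := Equiv.Perm.viaEmbedding hinv.toPerm ⟨g, hg⟩ with hπdef
  -- column phases
  obtain ⟨γ, hγ1, hγ2, hγabs⟩ : ∃ γ : Fin d → ℂ,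
      (∀ p : Fin m × Bool, γ (g p) = c p.1) ∧
      (∀ k, (∀ a b, g (a, b) ≠ k) → γ k = 1) ∧
      (∀ k, ‖γ k‖ = 1) := by
    refine ⟨fun k => if h : ∃ p : Fin m × Bool, g p = k then c h.choose.1 else 1, ?_, ?_, ?_⟩
    · intro p
      have hex : ∃ q : Fin m × Bool, g q = g p := ⟨p, rfl⟩
      dsimp only
      rw [dif_pos hex]
      exact congrArg (fun q : Fin m × Bool => c q.1) (hg hex.choose_spec)
    · intro k hk
      dsimp only
      rw [dif_neg]
      rintro ⟨p, hp⟩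
      exact hk p.1 p.2 hp
    · intro k
      dsimp only
      by_cases h : ∃ p : Fin m × Bool, g p = k
      · rw [dif_pos h]; exact hcabs _
      · rw [dif_neg h]; norm_num
  have hγne : ∀ k, γ k ≠ 0 := by
    intro k h
    have := hγabs k
    rw [h] at this
    simp at this
  -- row phases
  obtain ⟨ρ, hρ⟩ : ∃ ρ : Fin d → ℂ,
      ∀ j, ρ j = cexp (I * δ j * (η : ℂ)) * (if y then δ j else 1) := ⟨_, fun _ => rfl⟩
  have hρabs : ∀ j, ‖ρ j‖ = 1 := by
    intro j
    rw [hρ j, norm_mul, abs_exp_sgnMul (hδsign j)]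
    cases y
    · simp
    · rcases hδsign j with h | h <;> simp [h]
  have hρne : ∀ j, ρ j ≠ 0 := by
    intro j h
    have := hρabs j
    rw [h] at this
    simp at this
  -- the key identity
  have hKEY : ∀ j k, d1 j * ((H2 (σ j) (τ k) : ℝ) : ℂ) * d2 k =
      ρ j * γ k * ((H1 j (π k) : ℝ) : ℂ) := by
    intro j k
    by_cases hk : ∃ p : Fin m × Bool, g p = k
    · obtain ⟨⟨a, b⟩, rfl⟩ := hk
      rw [← hMeq j (g (a, b)), hM2 ξ j a b, hπg (a, b), hγ1 (a, b), hρ j, hcrel a j]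
      by_cases hxa : x a = true
      · simp only [hxa, if_true, Bool.true_xor]
        rw [← hswap a b j]
        ring
      · have hxa' : x a = false := by simpa using hxa
        simp only [hxa', Bool.false_xor, Bool.false_eq_true, if_false]
        ring
    · push_neg at hk
      have hk' : ∀ a b, g (a, b) ≠ k := fun a b => hk (a, b)
      rw [← hMeq j k, hM1 ξ j k hk', hπk k hk', hγ2 k hk', hρ j, hres ⟨k, hk'⟩ j]
      ring
  -- assemble the equivalence
  refine ⟨fun j => (ρ j)⁻¹ * d1 j, fun k => d2 (π.symm k) * (γ (π.symm k))⁻¹, ?_, ?_,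
    σ, π.symm.trans τ, ?_⟩
  · intro i
    simp [map_mul, map_inv₀, hρabs, hd1]
  · intro k
    simp [map_mul, map_inv₀, hγabs, hd2]
  · intro i j
    have h := hKEY i (π.symm j)
    rw [Equiv.apply_symm_apply] at h
    simp only [Matrix.map_apply, Equiv.trans_apply]
    field_simp [hρne i, hγne ((Equiv.symm π) j)]
    linear_combination -h
end

section
/- For d even, the matrix F_d(ξ⃗) = F_d ∘ Exp(iR(ξ⃗)), where R_{i,j} = ξ_{(j mod d/2) - 1} when i is odd and j mod (d/2) ≠ 0, and R_{i,j} = 0 otherwise, is a complex Hadamard matrix for all (ξ_1,...,ξ_{d/2-1}) ∈ ℝ^{d/2-1}. -/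
open Complex Finset

lemma geom_exp_zero (n : ℕ) (hn : 0 < n) (a : ℤ) (h : ¬ (n:ℤ) ∣ a) :
    ∑ i ∈ Finset.range n, Complex.exp (2 * Real.pi * Complex.I * a / n) ^ i = 0 := by
  have hn' : (n:ℂ) ≠ 0 := Nat.cast_ne_zero.mpr hn.ne'
  have hz : Complex.exp (2 * Real.pi * Complex.I * a / n) ≠ 1 := by
    intro hc
    rw [Complex.exp_eq_one_iff] at hc
    obtain ⟨t, ht⟩ := hc
    apply h
    refine ⟨t, ?_⟩
    have h2 : (2 : ℂ) * Real.pi * Complex.I ≠ 0 := by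
      simp [Real.pi_ne_zero, Complex.I_ne_zero]
    have : (a : ℂ) = (n : ℂ) * t := by
      field_simp at ht
      apply mul_left_cancel₀ h2
      linear_combination (2 * (Real.pi:ℂ) * Complex.I) * ht
    exact_mod_cast this
  rw [geom_sum_eq hz]
  have hpow : Complex.exp (2 * Real.pi * Complex.I * a / n) ^ n = 1 := by
    rw [← Complex.exp_nat_mul]
    have : (n:ℂ) * (2 * Real.pi * Complex.I * a / n) = a * (2 * Real.pi * Complex.I) := by
      field_simp
    rw [this, Complex.exp_int_mul_two_pi_mul_I]
  rw [hpow]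
  simp

lemma sum_range_two_mul (m : ℕ) (f : ℕ → ℂ) :
    ∑ i ∈ Finset.range (2 * m), f i = ∑ t ∈ Finset.range m, (f (2*t) + f (2*t+1)) := by
  induction m with
  | zero => simp
  | succ k ih =>
      rw [Nat.mul_succ, Finset.sum_range_succ, Finset.sum_range_succ, Finset.sum_range_succ, ← ih]
      ring_nf

/-- The phase function of the family. -/
noncomputable def Rfun (ξ : ℕ → ℝ) (m : ℕ) (n l : ℕ) : ℝ :=
  if n % 2 = 1 ∧ l % m ≠ 0 then ξ (l % m - 1) else 0

/-- for even `d = 2m`, the matrix `F_d ∘ Exp(iR(ξ))`, where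
`R_{i,j} = ξ_{(j mod m) - 1}` when `i` is odd and `j mod m ≠ 0`, and `R_{i,j} = 0`
otherwise, is a complex Hadamard matrix for all real parameters `ξ₁, …, ξ_{m-1}`. -/
theorem fourier_family_even_dim (d m : ℕ) (hd : d = 2 * m) (hm : 0 < m)
    (ξ : ℕ → ℝ) (M : Matrix (Fin d) (Fin d) ℂ)
    (hM : ∀ i j : Fin d, M i j =
      Complex.exp (2 * Real.pi * Complex.I * (i : ℕ) * (j : ℕ) / d) *
      Complex.exp (Complex.I *
        ((if (i : ℕ) % 2 = 1 ∧ (j : ℕ) % m ≠ 0 then ξ ((j : ℕ) % m - 1) else 0 : ℝ) : ℂ))) :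
    IsCHM M := by
  subst hd
  have hm' : (m:ℂ) ≠ 0 := Nat.cast_ne_zero.mpr hm.ne'
  have h2m : ((2*m:ℕ):ℂ) ≠ 0 := by
    simp [Nat.cast_ne_zero]; omega
  constructor
  · intro i j
    rw [hM, norm_mul]
    have h1 : (2 * (Real.pi:ℂ) * Complex.I * ((i:ℕ):ℂ) * ((j:ℕ):ℂ) / ((2*m:ℕ):ℂ)) =
        (((2 * Real.pi * (i:ℕ) * (j:ℕ) / (2*m:ℕ) : ℝ)) : ℂ) * Complex.I := by
      push_cast; ring
    rw [h1, Complex.norm_exp_ofReal_mul_I]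
    rw [mul_comm Complex.I, Complex.norm_exp_ofReal_mul_I]
    norm_num
  · intro j k hjk
    set a : ℤ := ((k:ℕ):ℤ) - ((j:ℕ):ℤ) with ha
    have ha0 : a ≠ 0 := by
      simp only [ha, sub_ne_zero, ne_eq, Int.natCast_inj]
      exact fun h => hjk (Fin.ext h.symm)
    set F : ℕ → ℂ := fun n =>
      Complex.exp ((n:ℂ) * (2 * Real.pi * Complex.I * (a:ℂ) / ((2*m:ℕ):ℂ))) *
      Complex.exp (Complex.I * ((Rfun ξ m n (k:ℕ) - Rfun ξ m n (j:ℕ) : ℝ) : ℂ)) with hF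
    have key : ∀ i : Fin (2*m), (starRingEnd ℂ) (M i j) * M i k = F (i:ℕ) := by
      intro i
      rw [hM i j, hM i k, map_mul, ← Complex.exp_conj, ← Complex.exp_conj, hF]
      simp only [Rfun]
      rw [← Complex.exp_add, ← Complex.exp_add, ← Complex.exp_add, ← Complex.exp_add]
      congr 1
      simp only [map_mul, map_div₀, Complex.conj_I, Complex.conj_ofReal, map_ofNat,
        Complex.conj_natCast]
      rw [ha]
      push_cast
      ring
    rw [Finset.sum_congr rfl (fun i _ => key i), Fin.sum_univ_eq_sum_range F (2*m)]
    by_cases hcase : (j:ℕ) % m = (k:ℕ) % m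
    · have hR : ∀ n, Rfun ξ m n (k:ℕ) = Rfun ξ m n (j:ℕ) := by
        intro n; simp [Rfun, hcase]
      have hF' : ∀ n, F n = Complex.exp (2 * Real.pi * Complex.I * (a:ℂ) / ((2*m:ℕ):ℂ)) ^ n := by
        intro n
        rw [hF]
        simp only [hR, sub_self, Complex.ofReal_zero, mul_zero, Complex.exp_zero, mul_one]
        rw [← Complex.exp_nat_mul]
      rw [Finset.sum_congr rfl (fun n _ => hF' n)]
      apply geom_exp_zero (2*m) (by omega) a
      intro hdvd
      have h1 : (2*m:ℤ) ≤ |a| := Int.le_of_dvd (abs_pos.mpr ha0) ((dvd_abs _ _).mpr (by exact_mod_cast hdvd))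
      have hk := k.isLt
      have hj := j.isLt
      have habs : |a| < 2*m := by
        rw [ha, abs_sub_lt_iff]
        constructor <;> [skip; skip] <;>
        · have : ((k:ℕ):ℤ) < 2*m := by exact_mod_cast hk
          have : ((j:ℕ):ℤ) < 2*m := by exact_mod_cast hj
          omega
      omega
    · have hmdvd : ¬ (m:ℤ) ∣ a := by
        intro hdvd
        apply hcase
        have h1 : ((j:ℕ):ℤ) ≡ ((k:ℕ):ℤ) [ZMOD (m:ℤ)] :=
          Int.modEq_iff_dvd.mpr (by rw [← ha]; exact hdvd)
        have h2 : ((j:ℕ):ℤ) % (m:ℤ) = ((k:ℕ):ℤ) % (m:ℤ) := h1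
        exact_mod_cast h2
      rw [sum_range_two_mul m F]
      set w : ℂ := Complex.exp (2 * Real.pi * Complex.I * (a:ℂ) / (m:ℂ)) with hw
      set C : ℂ := 1 + Complex.exp (2 * Real.pi * Complex.I * (a:ℂ) / ((2*m:ℕ):ℂ)) *
        Complex.exp (Complex.I * ((Rfun ξ m 1 (k:ℕ) - Rfun ξ m 1 (j:ℕ) : ℝ) : ℂ)) with hC
      have hterm : ∀ t, F (2*t) + F (2*t+1) = w ^ t * C := by
        intro t
        have he : (((2*t:ℕ)):ℂ) * (2 * Real.pi * Complex.I * (a:ℂ) / ((2*m:ℕ):ℂ)) =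
            (t:ℂ) * (2 * Real.pi * Complex.I * (a:ℂ) / (m:ℂ)) := by
          push_cast
          field_simp
        have ho : (((2*t+1:ℕ)):ℂ) * (2 * Real.pi * Complex.I * (a:ℂ) / ((2*m:ℕ):ℂ)) =
            (t:ℂ) * (2 * Real.pi * Complex.I * (a:ℂ) / (m:ℂ)) +
            2 * Real.pi * Complex.I * (a:ℂ) / ((2*m:ℕ):ℂ) := by
          push_cast
          field_simp
        have hRe : ∀ l, Rfun ξ m (2*t) l = 0 := by
          intro l; simp [Rfun, Nat.mul_mod_right]
        have hRo : ∀ l, Rfun ξ m (2*t+1) l = Rfun ξ m 1 l := by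
          intro l; simp [Rfun, Nat.add_mul_mod_self_left, Nat.mul_add_mod]
        rw [hF]
        simp only [hRe, hRo, sub_self, Complex.ofReal_zero, mul_zero, Complex.exp_zero, mul_one]
        rw [he, ho, Complex.exp_add, Complex.exp_nat_mul, ← hw, hC]
        ring
      rw [Finset.sum_congr rfl (fun t _ => hterm t), ← Finset.sum_mul]
      rw [show (∑ t ∈ Finset.range m, w ^ t) = 0 from ?_, zero_mul]
      rw [hw]
      exact geom_exp_zero m hm a hmdvd
end
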